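/- Let φ be an admissible error function. Then for all positive integers n, k and all u ∈ D_Δ: E[φ](n/(n+k), u) ≤ n·k·φ*(u/(n+k)), where the inequality is understood in the extended reals. -/

import Mathlib

noncomputable section

/-- The distance of a real number to the set of integers. -/
noncomputable def dZ (x : ℝ) : ℝ := ⨅ k : ℤ, |x - (k : ℝ)|

variable {X : Type*} [AddCommGroup X] [Module ℝ X]

/-- The difference set `D_Δ = {x - y : x, y ∈ D}`. -/
def diffSet (D : Set X) : Set X := {u | ∃ x ∈ D, ∃ y ∈ D, u = x - y}

/-- The half difference set `(1/2)·D_Δ`. -/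
def halfDiff (D : Set X) : Set X := {u | ∃ x ∈ D, ∃ y ∈ D, u = (2⁻¹ : ℝ) • (x - y)}

/-- `f` is `φ`-Jensen convex on `D`. -/
def JCW (D : Set X) (φ : X → ℝ) (f : X → ℝ) : Prop :=
  ∀ x ∈ D, ∀ y ∈ D,
    f ((2⁻¹ : ℝ) • (x + y)) ≤ 2⁻¹ * f x + 2⁻¹ * f y + φ ((2⁻¹ : ℝ) • (x - y))

/-- `φ` is an admissible error function on `(1/2)·D_Δ`:
it is even there, vanishes at `0`, and admits a `φ`-Jensen convex function. -/
def Admissible (D : Set X) (φ : X → ℝ) : Prop :=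
  (∀ u ∈ halfDiff D, φ (-u) = φ u) ∧ φ 0 = 0 ∧ ∃ f : X → ℝ, JCW D φ f

/-- `φ*(u) = inf_{m ∈ ℕ, m ≥ 1} m² · φ(u/m)`, valued in `[-∞, ∞)` viewed inside `EReal`. -/
noncomputable def phiStar (φ : X → ℝ) (u : X) : EReal :=
  ⨅ m : ℕ+, ((((m : ℕ) : ℝ) ^ 2 * φ ((1 / ((m : ℕ) : ℝ)) • u) : ℝ) : EReal)

/-- The real-valued version of `φ*` (equal to `φ*` wherever `φ*` is finite). -/
noncomputable def phiStarR (φ : X → ℝ) (u : X) : ℝ := (phiStar φ u).toReal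

/-- The extended error function
`E[φ](λ,u) = sup { f(λx+(1-λ)y) - λf(x) - (1-λ)f(y) : f φ-Jensen convex, x,y ∈ D, x-y = u }`. -/
noncomputable def Eerr (D : Set X) (φ : X → ℝ) (l : ℝ) (u : X) : EReal :=
  sSup {c : EReal | ∃ f : X → ℝ, JCW D φ f ∧ ∃ x ∈ D, ∃ y ∈ D, x - y = u ∧
    c = ((f (l • x + (1 - l) • y) - l * f x - (1 - l) * f y : ℝ) : EReal)}

/-- Discrete chord lemma: a sequence that is midpoint-convex on `{0,…,N}`
lies below the chord through its endpoints. -/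
lemma chordSeq (h : ℕ → ℝ) (N : ℕ)
    (hc : ∀ i, i + 2 ≤ N → 2 * h (i+1) ≤ h i + h (i+2)) :
    ∀ j, j ≤ N → (N:ℝ) * h j ≤ ((N:ℝ) - (j:ℝ)) * h 0 + (j:ℝ) * h N := by
  set d : ℕ → ℝ := fun i => h (i+1) - h i with hd
  have mono : ∀ l, l + 1 ≤ N → ∀ i, i ≤ l → d i ≤ d l := by
    intro l
    induction l with
    | zero => intro _ i hi; interval_cases i; exact le_rfl
    | succ m ih =>
      intro hl i hi
      rcases Nat.lt_or_ge i (m+1) with h' | h'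
      · have h1 : d i ≤ d m := ih (by omega) i (by omega)
        have h2 : d m ≤ d (m+1) := by
          have := hc m (by omega)
          simp only [hd]; linarith
        linarith
      · have : i = m + 1 := by omega
        subst this; exact le_rfl
  intro j hj
  have tele : ∀ p, h p = h 0 + ∑ i ∈ Finset.range p, d i := by
    intro p; rw [Finset.sum_range_sub]; ring
  have key : ((N:ℝ) - j) * ∑ i ∈ Finset.range j, d i
      ≤ (j:ℝ) * ∑ l ∈ Finset.Ico j N, d l := by
    have hNj : ((N:ℝ) - (j:ℝ)) = ((N - j : ℕ) : ℝ) := by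
      rw [Nat.cast_sub hj]
    rw [hNj, Finset.mul_sum]
    have step : ∀ i ∈ Finset.range j,
        ((N - j : ℕ) : ℝ) * d i ≤ ∑ l ∈ Finset.Ico j N, d l := by
      intro i hi
      have hi' := Finset.mem_range.mp hi
      have hcard : (Finset.Ico j N).card • d i ≤ ∑ l ∈ Finset.Ico j N, d l := by
        apply Finset.card_nsmul_le_sum
        intro l hl
        have hl' := Finset.mem_Ico.mp hl
        exact mono l (by omega) i (by omega)
      simpa [Nat.card_Ico, nsmul_eq_mul] using hcard
    calc ∑ i ∈ Finset.range j, ((N - j : ℕ) : ℝ) * d i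
        ≤ ∑ _i ∈ Finset.range j, ∑ l ∈ Finset.Ico j N, d l := Finset.sum_le_sum step
      _ = (j:ℝ) * ∑ l ∈ Finset.Ico j N, d l := by
          rw [Finset.sum_const, Finset.card_range, nsmul_eq_mul]
  have split : ∑ i ∈ Finset.range N, d i
      = ∑ i ∈ Finset.range j, d i + ∑ l ∈ Finset.Ico j N, d l := by
    rw [Finset.range_eq_Ico,
      ← Finset.sum_Ico_consecutive _ (Nat.zero_le j) hj]
    rw [Finset.range_eq_Ico]
  rw [tele j, tele N, split]
  nlinarith [key]

/-- Grid estimate for a `φ`-Jensen convex function along the segment `[y, x]`. -/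
lemma jcw_grid {X : Type*} [AddCommGroup X] [Module ℝ X] (D : Set X) (hD : Convex ℝ D)
    (φ f : X → ℝ) (hf : JCW D φ f) (x y : X) (hx : x ∈ D) (hy : y ∈ D)
    (N : ℕ) (hN : 0 < N) (j : ℕ) (hj : j ≤ N) :
    (N:ℝ) * f (((j:ℝ)/(N:ℝ)) • x + (1 - (j:ℝ)/(N:ℝ)) • y)
      ≤ ((N:ℝ) - (j:ℝ)) * f y + (j:ℝ) * f x
        + (N:ℝ) * ((j:ℝ) * ((N:ℝ) - (j:ℝ)) * φ ((1/(N:ℝ)) • (x - y))) := by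
  have hN0 : (N:ℝ) ≠ 0 := by positivity
  set p : ℕ → X := fun i => ((i:ℝ)/(N:ℝ)) • x + (1 - (i:ℝ)/(N:ℝ)) • y with hp
  have hpD : ∀ i, i ≤ N → p i ∈ D := by
    intro i hi
    apply hD hx hy
    · positivity
    · have hle : (i:ℝ) ≤ (N:ℝ) := Nat.cast_le.mpr hi
      have : (i:ℝ)/(N:ℝ) ≤ 1 := by
        rw [div_le_one (by positivity)]; exact hle
      linarith
    · ring
  set c : ℝ := φ ((1/(N:ℝ)) • (x - y)) with hcdef
  set g : ℕ → ℝ := fun i => f (p i) with hg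
  set h : ℕ → ℝ := fun i => g i - c * (i:ℝ) * ((N:ℝ) - (i:ℝ)) with hh
  have hmid : ∀ i, i + 2 ≤ N → 2 * h (i+1) ≤ h i + h (i+2) := by
    intro i hi2
    have h1 : (2⁻¹ : ℝ) • (p (i+2) + p i) = p (i+1) := by
      simp only [hp]
      push_cast
      match_scalars <;> field_simp <;> ring
    have h2 : (2⁻¹ : ℝ) • (p (i+2) - p i) = (1/(N:ℝ)) • (x - y) := by
      simp only [hp]
      push_cast
      match_scalars <;> field_simp <;> ring
    have := hf (p (i+2)) (hpD _ hi2) (p i) (hpD _ (by omega))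
    rw [h1, h2] at this
    have hgi : 2 * g (i+1) ≤ g i + g (i+2) + 2 * c := by
      simp only [hg]; rw [hcdef]; linarith
    have e : ((i:ℝ)) * ((N:ℝ) - i) + ((i:ℝ)+2) * ((N:ℝ) - i - 2) + 2
        - 2 * ((i:ℝ)+1) * ((N:ℝ) - i - 1) = 0 := by ring
    simp only [hh]
    push_cast
    nlinarith [hgi]
  have key := chordSeq h N hmid j hj
  have hp0 : f (p 0) = f y := by simp [hp]
  have hpN : f (p N) = f x := by
    have hx1 : p N = x := by simp [hp, div_self hN0]
    rw [hx1]
  simp only [hh, hg, hp0, hpN] at key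
  push_cast at key
  have hgoal : f (((j:ℝ)/(N:ℝ)) • x + (1 - (j:ℝ)/(N:ℝ)) • y) = f (p j) := rfl
  rw [hgoal]
  nlinarith [key]

/-- `E[φ](n/(n+k), u) ≤ n·k·φ*(u/(n+k))` in the extended reals. -/
theorem stmt14 {X : Type*} [AddCommGroup X] [Module ℝ X] (D : Set X)
    (hD : Convex ℝ D) (hne : D.Nonempty) (φ : X → ℝ) (hφ : Admissible D φ)
    (n k : ℕ) (hn : 0 < n) (hk : 0 < k) (u : X) (hu : u ∈ diffSet D) :
    Eerr D φ ((n : ℝ) / ((n : ℝ) + (k : ℝ))) u ≤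
      (((n : ℝ) * (k : ℝ) : ℝ) : EReal) *
        phiStar φ ((1 / ((n : ℝ) + (k : ℝ))) • u) := by
  have hA : (0:ℝ) < (n:ℝ) + (k:ℝ) := by positivity
  have hc0 : (0:ℝ) < (n:ℝ) * (k:ℝ) := by positivity
  apply sSup_le
  rintro c ⟨f, hf, x, hx, y, hy, hxy, rfl⟩
  set l : ℝ := (n:ℝ)/((n:ℝ)+(k:ℝ)) with hl
  set v : X := (1/((n:ℝ)+(k:ℝ))) • u with hv
  -- real bound for each m
  have hbound : ∀ m : ℕ+,
      f (l • x + (1-l) • y) - l * f x - (1-l) * f y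
        ≤ (n:ℝ)*(k:ℝ) * ((((m:ℕ):ℝ))^2 * φ ((1/((m:ℕ):ℝ)) • v)) := by
    intro m
    have hM : (0:ℝ) < ((m:ℕ):ℝ) := by exact_mod_cast m.pos
    set N : ℕ := (n+k)*(m:ℕ) with hN
    set j : ℕ := n*(m:ℕ) with hj
    have hNpos : 0 < N := by
      have := m.pos; positivity
    have hjN : j ≤ N := Nat.mul_le_mul_right _ (by omega)
    have key := jcw_grid D hD φ f hf x y hx hy N hNpos j hjN
    have hNr : ((N:ℕ):ℝ) = ((n:ℝ)+(k:ℝ))*((m:ℕ):ℝ) := by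
      rw [hN]; push_cast; ring
    have hjr : ((j:ℕ):ℝ) = (n:ℝ)*((m:ℕ):ℝ) := by
      rw [hj]; push_cast; ring
    have hAM : (0:ℝ) < ((n:ℝ)+(k:ℝ))*((m:ℕ):ℝ) := by positivity
    have hlj : ((j:ℕ):ℝ)/((N:ℕ):ℝ) = l := by
      rw [hNr, hjr, hl]
      field_simp
    have harg : (1/((N:ℕ):ℝ)) • (x - y) = (1/((m:ℕ):ℝ)) • v := by
      rw [hxy, hv, smul_smul]
      congr 1
      rw [hNr]
      field_simp
    rw [hlj, harg, hNr, hjr] at key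
    -- key : (A*M) * F ≤ (A*M - n*M) * f y + (n*M) * f x + (A*M)*((n*M)*(A*M - n*M)*φv)
    set F : ℝ := f (l • x + (1-l) • y) with hF
    set φv : ℝ := φ ((1/((m:ℕ):ℝ)) • v) with hφv
    set M : ℝ := ((m:ℕ):ℝ)
    have hsub : ((n:ℝ)+(k:ℝ))*M - (n:ℝ)*M = (k:ℝ)*M := by ring
    rw [hsub] at key
    have key2 : F ≤ (1-l)*(f y) + l*(f x) + (n:ℝ)*(k:ℝ)*(M^2*φv) := by
      calc F = (((n:ℝ)+(k:ℝ))*M * F)/(((n:ℝ)+(k:ℝ))*M) := by field_simp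
        _ ≤ ((k:ℝ)*M * f y + (n:ℝ)*M * f x
              + ((n:ℝ)+(k:ℝ))*M*((n:ℝ)*M*((k:ℝ)*M)*φv))/(((n:ℝ)+(k:ℝ))*M) := by
            gcongr
        _ = (1-l)*(f y) + l*(f x) + (n:ℝ)*(k:ℝ)*(M^2*φv) := by
            rw [hl]
            field_simp
            ring
    linarith
  -- EReal part
  rw [← EReal.div_le_iff_le_mul (by exact_mod_cast hc0) (EReal.coe_ne_top _)]
  rw [← EReal.coe_div]
  apply le_iInf
  intro m
  rw [EReal.coe_le_coe_iff]
  rw [div_le_iff₀ hc0]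
  have := hbound m
  linarith
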